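/- Let B be a symmetric positive definite n×n matrix with at most N nonzero entries per row, D its diagonal, and C its strictly lower triangular part. Then every eigenvalue of D^{−1/2} C D^{−1/2} + D^{−1/2} Cᵀ D^{−1/2} is bounded in absolute value by N, and consequently the symmetric Gauss–Seidel matrix L = B + C D⁻¹ Cᵀ satisfies L ≤ B + N² D. -/

import Mathlib

open Matrix Finset

lemma sgs_aux_card_sum {ι : Type*} [DecidableEq ι] (s t : Finset ι) (f : ι → ℝ)
    (h0 : ∀ j ∈ s, f j ≠ 0 → j ∈ t) (h1 : ∀ j ∈ s, f j ≤ 1) :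
    ∑ j ∈ s, f j ≤ (t.card : ℝ) := by
  calc ∑ j ∈ s, f j = ∑ j ∈ s.filter (· ∈ t), f j := (Finset.sum_filter_of_ne h0).symm
    _ ≤ (s.filter (· ∈ t)).card • (1 : ℝ) :=
        Finset.sum_le_card_nsmul _ f 1 (fun j hj => h1 j (Finset.mem_of_mem_filter j hj))
    _ = ((s.filter (· ∈ t)).card : ℝ) := by simp
    _ ≤ (t.card : ℝ) := by
        exact_mod_cast Finset.card_le_card (fun j hj => (Finset.mem_filter.1 hj).2)

lemma sgs_aux_schur {n : ℕ} (N : ℕ) (s : Fin n → ℝ) (hs : ∀ i, 0 < s i)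
    (C : Matrix (Fin n) (Fin n) ℝ)
    (hrow : ∀ i, ∑ j, |C i j| / (s i * s j) ≤ (N : ℝ))
    (hcol : ∀ j, ∑ i, |C i j| / (s i * s j) ≤ (N : ℝ))
    (x : Fin n → ℝ) :
    ∑ i, ((Cᵀ *ᵥ x) i)^2 / (s i)^2 ≤ (N:ℝ)^2 * ∑ i, (s i)^2 * (x i)^2 := by
  set m : Matrix (Fin n) (Fin n) ℝ := fun i j => |C i j| / (s i * s j) with hm
  have hmnn : ∀ i j, 0 ≤ m i j := fun i j =>
    div_nonneg (abs_nonneg _) (mul_nonneg (hs i).le (hs j).le)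
  set u : Fin n → ℝ := fun j => s j * |x j| with hu
  have hunn : ∀ j, 0 ≤ u j := fun j => mul_nonneg (hs j).le (abs_nonneg _)
  have key : ∀ i, ((Cᵀ *ᵥ x) i)^2 / (s i)^2 ≤ (N:ℝ) * ∑ j, m j i * (u j)^2 := by
    intro i
    have h1 : |(Cᵀ *ᵥ x) i / s i| ≤ ∑ j, m j i * u j := by
      rw [abs_div, abs_of_pos (hs i), div_le_iff₀ (hs i)]
      calc |(Cᵀ *ᵥ x) i| = |∑ j, C j i * x j| := by
              simp [Matrix.mulVec, dotProduct, Matrix.transpose_apply]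
        _ ≤ ∑ j, |C j i * x j| := Finset.abs_sum_le_sum_abs _ _
        _ = (∑ j, m j i * u j) * s i := by
              rw [Finset.sum_mul]
              refine Finset.sum_congr rfl fun j _ => ?_
              rw [abs_mul, hm, hu]
              have h1 := (hs i).ne'
              have h2 := (hs j).ne'
              field_simp
    have h2 : (∑ j, m j i * u j)^2 ≤ (∑ j, m j i) * ∑ j, m j i * (u j)^2 := by
      have := Finset.sum_mul_sq_le_sq_mul_sq Finset.univ
        (fun j => Real.sqrt (m j i)) (fun j => Real.sqrt (m j i) * u j)
      calc (∑ j, m j i * u j)^2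
          = (∑ j, Real.sqrt (m j i) * (Real.sqrt (m j i) * u j))^2 := by
            congr 1; refine Finset.sum_congr rfl fun j _ => ?_
            symm; rw [← mul_assoc, Real.mul_self_sqrt (hmnn j i)]
        _ ≤ (∑ j, Real.sqrt (m j i)^2) * ∑ j, (Real.sqrt (m j i) * u j)^2 := this
        _ = (∑ j, m j i) * ∑ j, m j i * (u j)^2 := by
            congr 1
            · exact Finset.sum_congr rfl fun j _ => Real.sq_sqrt (hmnn j i)
            · refine Finset.sum_congr rfl fun j _ => ?_
              rw [mul_pow, Real.sq_sqrt (hmnn j i)]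
    have h3 : ((Cᵀ *ᵥ x) i)^2 / (s i)^2 = ((Cᵀ *ᵥ x) i / s i)^2 := (div_pow _ _ _).symm
    rw [h3, ← sq_abs]
    calc |(Cᵀ *ᵥ x) i / s i|^2 ≤ (∑ j, m j i * u j)^2 := by
          apply pow_le_pow_left₀ (abs_nonneg _) h1
      _ ≤ (∑ j, m j i) * ∑ j, m j i * (u j)^2 := h2
      _ ≤ (N:ℝ) * ∑ j, m j i * (u j)^2 := by
          apply mul_le_mul_of_nonneg_right (hcol i)
          exact Finset.sum_nonneg fun j _ => mul_nonneg (hmnn j i) (sq_nonneg _)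
  calc ∑ i, ((Cᵀ *ᵥ x) i)^2 / (s i)^2 ≤ ∑ i, (N:ℝ) * ∑ j, m j i * (u j)^2 :=
        Finset.sum_le_sum fun i _ => key i
    _ = (N:ℝ) * ∑ j, (u j)^2 * ∑ i, m j i := by
        rw [← Finset.mul_sum, Finset.sum_comm]
        congr 1
        refine Finset.sum_congr rfl fun j _ => ?_
        rw [Finset.mul_sum]
        exact Finset.sum_congr rfl fun i _ => by ring
    _ ≤ (N:ℝ) * ∑ j, (u j)^2 * (N:ℝ) := by
        apply mul_le_mul_of_nonneg_left _ (Nat.cast_nonneg N)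
        exact Finset.sum_le_sum fun j _ =>
          mul_le_mul_of_nonneg_left (hrow j) (sq_nonneg _)
    _ = (N:ℝ)^2 * ∑ j, (s j)^2 * (x j)^2 := by
        rw [Finset.mul_sum, Finset.mul_sum]
        refine Finset.sum_congr rfl fun j _ => ?_
        rw [hu, mul_pow, sq_abs]
        ring

/-- Gershgorin bound for the symmetric Gauss–Seidel preconditioner: if the SPD
matrix `B` has at most `N` nonzero entries per row, `D` is its diagonal and `C`
its strictly lower triangular part, then every eigenvalue of
`D^{−1/2}CD^{−1/2} + D^{−1/2}CᵀD^{−1/2}` is at most `N` in absolute value, and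
`L = B + C D⁻¹ Cᵀ ≤ B + N² D` in the Loewner order. -/
theorem stmt_10 {n : ℕ} (N : ℕ) (B D C : Matrix (Fin n) (Fin n) ℝ)
    (hB : B.PosDef)
    (hsparse : ∀ i : Fin n, (Finset.univ.filter (fun j => B i j ≠ 0)).card ≤ N)
    (hD : D = Matrix.diagonal (fun i => B i i))
    (hClow : ∀ i j : Fin n, i ≤ j → C i j = 0)
    (hdec : B = D - C - Cᵀ)
    (Dnh : Matrix (Fin n) (Fin n) ℝ)
    (hDnh : Dnh = Matrix.diagonal (fun i => (Real.sqrt (B i i))⁻¹)) :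
    (∀ μ : ℝ, Module.End.HasEigenvalue
        (Matrix.toLin' (Dnh * C * Dnh + (Dnh * C * Dnh)ᵀ)) μ → |μ| ≤ (N : ℝ)) ∧
    ((B + (N : ℝ)^2 • D) - (B + C * D⁻¹ * Cᵀ)).PosSemidef := by
  have hdiagpos : ∀ i, 0 < B i i := fun i => by
    exact hB.diag_pos
  have hBsym : ∀ i j, B j i = B i j := fun i j => by simpa using hB.1.apply i j
  have hsq : ∀ i j, (B i j)^2 ≤ B i i * B j j := by
    intro i j
    have hq : ∀ t : ℝ, 0 ≤ B i i * (t * t) + (2 * B i j) * t + B j j := by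
      intro t
      have h := hB.posSemidef.dotProduct_mulVec_nonneg (t • (Pi.single i 1 : Fin n → ℝ) + Pi.single j 1)
      have hform : (t • (Pi.single i 1 : Fin n → ℝ) + Pi.single j 1) ⬝ᵥ
          B *ᵥ (t • (Pi.single i 1 : Fin n → ℝ) + Pi.single j 1)
          = B i i * (t * t) + (2 * B i j) * t + B j j := by
        simp only [Matrix.mulVec_add, Matrix.mulVec_smul, dotProduct_add,
          add_dotProduct, dotProduct_smul, smul_dotProduct,
          Matrix.mulVec_single, single_dotProduct, smul_eq_mul, mul_one,
          Matrix.col_apply, MulOpposite.op_one, one_smul, one_mul]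
        rw [hBsym i j]; ring
      rw [star_trivial, hform] at h
      exact h
    have := discrim_le_zero hq
    rw [discrim] at this
    nlinarith
  set s : Fin n → ℝ := fun i => Real.sqrt (B i i) with hsdef
  have hspos : ∀ i, 0 < s i := fun i => Real.sqrt_pos.2 (hdiagpos i)
  have hs2 : ∀ i, s i ^ 2 = B i i := fun i => Real.sq_sqrt (hdiagpos i).le
  have habsB : ∀ i j, |B i j| ≤ s i * s j := by
    intro i j
    rw [← Real.sqrt_sq_eq_abs, hsdef]
    rw [← Real.sqrt_mul (hdiagpos i).le]
    exact Real.sqrt_le_sqrt (hsq i j)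
  have hoff : ∀ i j, i ≠ j → C i j + C j i = -B i j := by
    intro i j hij
    have hd := congrFun (congrFun hdec i) j
    simp only [Matrix.sub_apply, Matrix.transpose_apply, hD,
      Matrix.diagonal_apply_ne _ hij] at hd
    linarith
  have hCval : ∀ i j, C i j = 0 ∨ C i j = -B i j := by
    intro i j
    rcases le_or_gt i j with h | h
    · exact Or.inl (hClow i j h)
    · right
      have := hoff i j (ne_of_gt h)
      rw [hClow j i h.le] at this
      linarith
  have habsC : ∀ i j, |C i j| ≤ s i * s j := fun i j => by
    rcases hCval i j with h | h
    · rw [h, abs_zero]; positivity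
    · rw [h, abs_neg]; exact habsB i j
  have hCzero : ∀ i j, B i j = 0 → C i j = 0 := fun i j hb => by
    rcases hCval i j with h | h
    · exact h
    · rw [h, hb, neg_zero]
  have hterm1 : ∀ i j, |C i j| / (s i * s j) ≤ 1 := fun i j =>
    (div_le_one (mul_pos (hspos i) (hspos j))).2 (habsC i j)
  have hrow : ∀ i, ∑ j, |C i j| / (s i * s j) ≤ (N:ℝ) := by
    intro i
    refine (sgs_aux_card_sum univ (univ.filter fun j => B i j ≠ 0) _ ?_
      fun j _ => hterm1 i j).trans ?_
    · intro j _ hne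
      simp only [mem_filter, mem_univ, true_and]
      intro hb
      exact hne (by rw [hCzero i j hb, abs_zero, zero_div])
    · exact_mod_cast hsparse i
  have hcol : ∀ j, ∑ i, |C i j| / (s i * s j) ≤ (N:ℝ) := by
    intro j
    refine (sgs_aux_card_sum univ (univ.filter fun i => B j i ≠ 0) _ ?_
      fun i _ => hterm1 i j).trans ?_
    · intro i _ hne
      simp only [mem_filter, mem_univ, true_and]
      intro hb
      rw [hBsym i j] at hb
      exact hne (by rw [hCzero i j hb, abs_zero, zero_div])
    · exact_mod_cast hsparse j
  constructor
  · -- Gershgorin part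
    intro μ hμ
    obtain ⟨k, hk⟩ := eigenvalue_mem_ball hμ
    have hEntry : ∀ i j, (Dnh * C * Dnh + (Dnh * C * Dnh)ᵀ) i j
        = (s i)⁻¹ * C i j * (s j)⁻¹ + (s j)⁻¹ * C j i * (s i)⁻¹ := by
      intro i j
      rw [hDnh]
      simp [Matrix.add_apply, Matrix.transpose_apply, Matrix.diagonal_mul, Matrix.mul_diagonal,
        Matrix.mul_apply, Matrix.diagonal_apply, Finset.sum_ite_eq, Finset.sum_ite_eq']
      simp only [hsdef]; ring
  -- continue
    have hEkk : (Dnh * C * Dnh + (Dnh * C * Dnh)ᵀ) k k = 0 := by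
      rw [hEntry, hClow k k le_rfl]; ring
    have hval : ∀ j, j ≠ k → ‖(Dnh * C * Dnh + (Dnh * C * Dnh)ᵀ) k j‖
        = |B k j| / (s k * s j) := by
      intro j hj
      rw [hEntry, Real.norm_eq_abs]
      have h1 : (s k)⁻¹ * C k j * (s j)⁻¹ + (s j)⁻¹ * C j k * (s k)⁻¹
          = (C k j + C j k) / (s k * s j) := by
        field_simp
      rw [h1, hoff k j (Ne.symm hj), abs_div, abs_neg,
        abs_of_pos (mul_pos (hspos k) (hspos j))]
    have hsumle : ∑ j ∈ univ.erase k, ‖(Dnh * C * Dnh + (Dnh * C * Dnh)ᵀ) k j‖ ≤ (N:ℝ) := by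
      refine (sgs_aux_card_sum (univ.erase k) (univ.filter fun j => B k j ≠ 0) _ ?_ ?_).trans ?_
      · intro j hj hne
        simp only [mem_filter, mem_univ, true_and]
        intro hb
        apply hne
        rw [hval j (Finset.ne_of_mem_erase hj), hb, abs_zero, zero_div]
      · intro j hj
        rw [hval j (Finset.ne_of_mem_erase hj)]
        exact (div_le_one (mul_pos (hspos k) (hspos j))).2 (habsB k j)
      · exact_mod_cast hsparse k
    rw [Metric.mem_closedBall, hEkk, Real.dist_eq, sub_zero] at hk
    exact hk.trans hsumle
  · -- Loewner part
    rw [add_sub_add_left_eq_sub]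
    have hDinv : D⁻¹ = diagonal fun i => (B i i)⁻¹ := by
      apply inv_eq_right_inv
      rw [hD, diagonal_mul_diagonal,
        show (fun i => B i i * (B i i)⁻¹) = fun _ => (1:ℝ) from
          funext fun i => mul_inv_cancel₀ (hdiagpos i).ne', diagonal_one]
    rw [posSemidef_iff_dotProduct_mulVec]
    constructor
    · show _ = _
      rw [hDinv, hD, conjTranspose_eq_transpose_of_trivial]
      rw [Matrix.transpose_sub, Matrix.transpose_smul, Matrix.transpose_mul,
        Matrix.transpose_mul, Matrix.transpose_transpose, Matrix.diagonal_transpose,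
        Matrix.diagonal_transpose, Matrix.mul_assoc]
    · intro x
      rw [star_trivial, hDinv, hD]
      have hX : (C * diagonal (fun i => (B i i)⁻¹) * Cᵀ) *ᵥ x
          = C *ᵥ (diagonal (fun i => (B i i)⁻¹) *ᵥ (Cᵀ *ᵥ x)) := by
        rw [Matrix.mulVec_mulVec, Matrix.mulVec_mulVec]
      have expand : x ⬝ᵥ (((N:ℝ)^2 • diagonal (fun i => B i i)
          - C * diagonal (fun i => (B i i)⁻¹) * Cᵀ) *ᵥ x)
          = (N:ℝ)^2 * (∑ i, (s i)^2 * (x i)^2)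
            - ∑ i, ((Cᵀ *ᵥ x) i)^2 / (s i)^2 := by
        rw [Matrix.sub_mulVec, dotProduct_sub, smul_mulVec,
          dotProduct_smul, hX, Matrix.dotProduct_mulVec x C,
          ← Matrix.mulVec_transpose]
        congr 1
        · simp only [smul_eq_mul]
          congr 1
          simp only [dotProduct, Matrix.mulVec_diagonal]
          refine Finset.sum_congr rfl fun i _ => ?_
          rw [hs2 i]; ring
        · simp only [dotProduct, Matrix.mulVec_diagonal]
          refine Finset.sum_congr rfl fun i _ => ?_
          rw [div_eq_mul_inv, hs2 i]; ring
      rw [expand, sub_nonneg]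
      exact sgs_aux_schur N s hspos C hrow hcol x
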